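/- Let Ω ⊂ ℝⁿ be a bounded domain, ε > 0, α ≥ 0, β > 0 with α + β = 1. Suppose u and u' are bounded Borel functions on Ω_ε satisfying the dynamic programming principle u = Tu and u' = Tu', with boundary values g and g' respectively on Γ_ε. Then sup_{x ∈ Ω} (u' − u)(x) ≤ sup_{x ∈ Γ_ε} (g' − g)(x). -/

import Mathlib

open MeasureTheory Metric Set

def bdryStrip {n : ℕ} (Ω : Set (EuclideanSpace ℝ (Fin n))) (ε : ℝ) :
    Set (EuclideanSpace ℝ (Fin n)) :=
  {x | x ∉ Ω ∧ Metric.infDist x Ω ≤ ε}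

set_option maxHeartbeats 2000000 in
/-- One-sided comparison for p-harmonious functions:
`sup_Ω (u' − u) ≤ sup_{Γ_ε} (g' − g)`. -/
theorem dpp_comparison_one_sided {n : ℕ} (hn : 0 < n) (Ω : Set (EuclideanSpace ℝ (Fin n)))
    (hΩo : IsOpen Ω) (hΩc : IsConnected Ω) (hΩb : Bornology.IsBounded Ω)
    (ε α β : ℝ) (hε : 0 < ε) (hα : 0 ≤ α) (hβ : 0 < β) (hαβ : α + β = 1)
    (u u' g g' : EuclideanSpace ℝ (Fin n) → ℝ)
    (hu : Measurable u) (hu' : Measurable u')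
    (Cu : ℝ) (hub : ∀ x, |u x| ≤ Cu) (Cu' : ℝ) (hu'b : ∀ x, |u' x| ≤ Cu')
    (hudpp : ∀ x ∈ Ω, u x =
      α / 2 * sSup (u '' ball x ε) + α / 2 * sInf (u '' ball x ε) +
        β * ⨍ y in ball x ε, u y)
    (hu'dpp : ∀ x ∈ Ω, u' x =
      α / 2 * sSup (u' '' ball x ε) + α / 2 * sInf (u' '' ball x ε) +
        β * ⨍ y in ball x ε, u' y)
    (hbg : ∀ x ∈ bdryStrip Ω ε, u x = g x)
    (hbg' : ∀ x ∈ bdryStrip Ω ε, u' x = g' x) :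
    sSup ((fun x => u' x - u x) '' Ω) ≤
      sSup ((fun x => g' x - g x) '' bdryStrip Ω ε) := by
  classical
  haveI : Nonempty (Fin n) := ⟨⟨0, hn⟩⟩
  set v : EuclideanSpace ℝ (Fin n) → ℝ := fun x => u' x - u x with hvdef
  set Γ : Set (EuclideanSpace ℝ (Fin n)) := bdryStrip Ω ε with hΓdef
  set M : ℝ := sSup (v '' Ω) with hMdef
  set K : ℝ := sSup ((fun x => g' x - g x) '' Γ) with hKdef
  by_contra hcon
  push_neg at hcon
  have hKM : K < M := hcon
  have hMK : 0 < M - K := by linarith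
  have hvmeas : Measurable v := hu'.sub hu
  set C : ℝ := Cu' + Cu with hCdef
  have hvb : ∀ x, |v x| ≤ C := fun x =>
    (abs_sub (u' x) (u x)).trans (add_le_add (hu'b x) (hub x))
  have hβ1 : β ≤ 1 := by linarith
  -- boundedness of sup sets
  have hbddΩ : BddAbove (v '' Ω) := by
    refine ⟨C, ?_⟩; rintro _ ⟨y, _, rfl⟩; exact (abs_le.1 (hvb y)).2
  have hbddΓ : BddAbove ((fun x => g' x - g x) '' Γ) := by
    refine ⟨C, ?_⟩; rintro _ ⟨y, hy, rfl⟩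
    have h2 : g' y - g y = v y := by rw [hvdef]; simp [hbg y hy, hbg' y hy]
    show g' y - g y ≤ C
    rw [h2]; exact (abs_le.1 (hvb y)).2
  have hvK : ∀ y ∈ Γ, v y ≤ K := by
    intro y hy
    have h1 : v y = g' y - g y := by rw [hvdef]; simp [hbg y hy, hbg' y hy]
    rw [h1]; exact le_csSup hbddΓ (mem_image_of_mem _ hy)
  have hvM : ∀ y ∈ Ω ∪ Γ, v y ≤ M := by
    rintro y (hy | hy)
    · exact le_csSup hbddΩ (mem_image_of_mem _ hy)
    · exact (hvK y hy).trans hKM.le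
  have hballsub : ∀ x ∈ Ω, ball x ε ⊆ Ω ∪ Γ := by
    intro x hx y hy
    by_cases hyΩ : y ∈ Ω
    · exact Or.inl hyΩ
    · exact Or.inr ⟨hyΩ, (infDist_le_dist_of_mem hx).trans (le_of_lt (mem_ball.1 hy))⟩
  -- volume facts
  set V0 : ℝ := (volume (ball (0 : EuclideanSpace ℝ (Fin n)) 1)).toReal with hV0def
  have hV0 : 0 < V0 :=
    ENNReal.toReal_pos (measure_ball_pos volume _ one_pos).ne' measure_ball_lt_top.ne
  have hvol : ∀ (y : EuclideanSpace ℝ (Fin n)) (r : ℝ), 0 ≤ r → (volume (ball y r)).toReal = r ^ n * V0 := by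
    intro y r hr
    rw [Measure.addHaar_ball volume y hr, finrank_euclideanSpace_fin, ENNReal.toReal_mul,
      ENNReal.toReal_ofReal (pow_nonneg hr n)]
  -- integrability
  have hIntOn : ∀ (f : EuclideanSpace ℝ (Fin n) → ℝ) (Cf : ℝ), Measurable f → (∀ y, |f y| ≤ Cf) →
      ∀ x : EuclideanSpace ℝ (Fin n), IntegrableOn f (ball x ε) volume := by
    intro f Cf hf hfb x
    exact Measure.integrableOn_of_bounded measure_ball_lt_top.ne hf.aestronglyMeasurable
      (ae_of_all _ fun y => by simpa using hfb y)
  have hIu : ∀ x : EuclideanSpace ℝ (Fin n), IntegrableOn u (ball x ε) volume := hIntOn u Cu hu hub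
  have hIu' : ∀ x : EuclideanSpace ℝ (Fin n), IntegrableOn u' (ball x ε) volume := hIntOn u' Cu' hu' hu'b
  have hIv : ∀ x : EuclideanSpace ℝ (Fin n), IntegrableOn v (ball x ε) volume := hIntOn v C hvmeas hvb
  -- key DPP inequality
  have hkey : ∀ x ∈ Ω, v x ≤ α * M + β * ⨍ y in ball x ε, v y := by
    intro x hx
    have hBne : (ball x ε).Nonempty := nonempty_ball.2 hε
    have hbu : BddAbove (u '' ball x ε) :=
      ⟨Cu, by rintro _ ⟨y, _, rfl⟩; exact (abs_le.1 (hub y)).2⟩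
    have hbu' : BddBelow (u' '' ball x ε) :=
      ⟨-Cu', by rintro _ ⟨y, _, rfl⟩; exact (abs_le.1 (hu'b y)).1⟩
    have hvMB : ∀ y ∈ ball x ε, v y ≤ M := fun y hy => hvM y (hballsub x hx hy)
    have hS : sSup (u' '' ball x ε) ≤ sSup (u '' ball x ε) + M := by
      apply csSup_le (hBne.image u')
      rintro _ ⟨y, hy, rfl⟩
      have h1 := hvMB y hy
      simp only [hvdef] at h1
      linarith [le_csSup hbu (mem_image_of_mem u hy)]
    have hI : sInf (u' '' ball x ε) ≤ sInf (u '' ball x ε) + M := by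
      rw [← sub_le_iff_le_add]
      apply le_csInf (hBne.image u)
      rintro _ ⟨y, hy, rfl⟩
      have h1 := hvMB y hy
      simp only [hvdef] at h1
      have h2 : sInf (u' '' ball x ε) ≤ u' y := csInf_le hbu' (mem_image_of_mem u' hy)
      linarith
    have hAvg : ⨍ y in ball x ε, v y =
        (⨍ y in ball x ε, u' y) - ⨍ y in ball x ε, u y := by
      rw [setAverage_eq volume v, setAverage_eq volume u', setAverage_eq volume u, ← smul_sub]
      congr 1
      simp only [hvdef]
      exact integral_sub (hIu' x) (hIu x)
    have h0 : v x = α/2 * (sSup (u' '' ball x ε) - sSup (u '' ball x ε)) +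
        α/2 * (sInf (u' '' ball x ε) - sInf (u '' ball x ε)) +
        β * ((⨍ y in ball x ε, u' y) - ⨍ y in ball x ε, u y) := by
      simp only [hvdef]
      rw [hu'dpp x hx, hudpp x hx]; ring
    rw [h0, ← hAvg]
    have hα2 : (0:ℝ) ≤ α/2 := by linarith
    have hm1 : α/2 * (sSup (u' '' ball x ε) - sSup (u '' ball x ε)) ≤ α/2 * M :=
      mul_le_mul_of_nonneg_left (by linarith) hα2
    have hm2 : α/2 * (sInf (u' '' ball x ε) - sInf (u '' ball x ε)) ≤ α/2 * M :=
      mul_le_mul_of_nonneg_left (by linarith) hα2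
    linarith
  -- the outside point w
  obtain ⟨R₀, hR₀⟩ := hΩb.subset_closedBall 0
  set R : ℝ := max R₀ 0 with hRdef
  have hRΩ : ∀ x ∈ Ω, ‖x‖ ≤ R := by
    intro x hx
    have := hR₀ hx
    rw [mem_closedBall, dist_zero_right] at this
    exact this.trans (le_max_left _ _)
  set w : EuclideanSpace ℝ (Fin n) := (R + 2*ε) • EuclideanSpace.single (⟨0, hn⟩ : Fin n) (1:ℝ) with hwdef
  have hwnorm : ‖w‖ = R + 2*ε := by
    rw [hwdef, norm_smul, Real.norm_eq_abs, EuclideanSpace.norm_single, norm_one, mul_one,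
      abs_of_nonneg (by positivity)]
  have hdistw : ∀ x ∈ Ω, 2*ε ≤ dist x w := by
    intro x hx
    have h1 : ‖w‖ - ‖x‖ ≤ ‖x - w‖ := by
      calc ‖w‖ - ‖x‖ ≤ ‖w - x‖ := norm_sub_norm_le w x
      _ = ‖x - w‖ := norm_sub_rev w x
    rw [dist_eq_norm]
    have h2 := hRΩ x hx
    rw [hwnorm] at h1
    linarith
  set D : ℝ := 2*R + 2*ε with hDdef
  have hdistD : ∀ x ∈ Ω, dist x w ≤ D := by
    intro x hx
    rw [dist_eq_norm]
    calc ‖x - w‖ ≤ ‖x‖ + ‖w‖ := norm_sub_le _ _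
    _ ≤ R + (R + 2*ε) := add_le_add (hRΩ x hx) hwnorm.le
    _ = D := by rw [hDdef]; ring
  -- the chain step
  have hstep : ∀ η δ : ℝ, 0 < δ → η < β * (4:ℝ)⁻¹^n * δ → ∀ x ∈ Ω, M - η < v x →
      ∃ y, y ∈ Ω ∪ Γ ∧ M - δ < v y ∧ dist y w ≤ dist x w - ε/2 := by
    intro η δ hδ hηδ x hx hvx
    have hwd : ε ≤ dist x w := le_trans (by linarith) (hdistw x hx)
    set d := dist x w with hddef
    have hd0 : 0 < d := lt_of_lt_of_le hε hwd
    set c := x + ((3*ε/4) / d) • (w - x) with hcdef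
    have hcx : dist c x = 3*ε/4 := by
      rw [dist_eq_norm]
      have h1 : c - x = ((3*ε/4) / d) • (w - x) := by rw [hcdef]; abel
      have hwx : ‖w - x‖ = d := by rw [hddef, dist_comm, dist_eq_norm]
      rw [h1, norm_smul, Real.norm_eq_abs, hwx, abs_of_nonneg (by positivity)]
      field_simp
    have hcw : dist c w = d - 3*ε/4 := by
      rw [dist_eq_norm]
      have h1 : c - w = (1 - (3*ε/4)/d) • (x - w) := by rw [hcdef]; module
      have hxw : ‖x - w‖ = d := by rw [hddef, dist_eq_norm]
      have ht : (3*ε/4)/d ≤ 3/4 := by rw [div_le_iff₀ hd0]; nlinarith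
      rw [h1, norm_smul, Real.norm_eq_abs, hxw, abs_of_nonneg (by linarith)]
      field_simp
    have hB'B : ball c (ε/4) ⊆ ball x ε := by
      intro y hy
      rw [mem_ball] at hy ⊢
      calc dist y x ≤ dist y c + dist c x := dist_triangle y c x
      _ < ε/4 + 3*ε/4 := by rw [hcx]; linarith
      _ = ε := by ring
    have hB'w : ∀ y ∈ ball c (ε/4), dist y w ≤ d - ε/2 := by
      intro y hy
      rw [mem_ball] at hy
      calc dist y w ≤ dist y c + dist c w := dist_triangle _ _ _
      _ ≤ ε/4 + (d - 3*ε/4) := by rw [hcw]; linarith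
      _ = d - ε/2 := by ring
    set T : ℝ := (volume (ball x ε)).toReal with hTdef
    have hT : T = ε^n * V0 := hvol x ε hε.le
    have hTpos : 0 < T := by rw [hT]; positivity
    set A : ℝ := ⨍ y in ball x ε, v y with hAdef
    have hIntA : ∫ y in ball x ε, v y = T * A := by
      rw [hAdef, setAverage_eq, smul_eq_mul, measureReal_def, ← hTdef, ← mul_assoc,
        mul_inv_cancel₀ hTpos.ne', one_mul]
    have hAlow : M - η/β < A := by
      have h1 := hkey x hx
      rw [← hAdef] at h1
      have hαM : α * M = M - β * M := by
        have : α = 1 - β := by linarith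
        rw [this]; ring
      have h2 : β * (M - η/β) < β * A := by
        have h3 : β*M - η < β*A := by rw [hαM] at h1; linarith
        calc β * (M - η/β) = β*M - η := by field_simp
        _ < β*A := h3
      exact lt_of_mul_lt_mul_left h2 hβ.le
    set Ebad := ball x ε ∩ {y | v y ≤ M - δ} with hEdef
    have hEmeas : MeasurableSet Ebad :=
      measurableSet_ball.inter (measurableSet_le hvmeas measurable_const)
    have hEsub : Ebad ⊆ ball x ε := inter_subset_left
    have hEfin : volume Ebad ≠ ⊤ := ne_top_of_le_ne_top measure_ball_lt_top.ne (measure_mono hEsub)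
    set eT : ℝ := (volume Ebad).toReal with heTdef
    have hIMv : IntegrableOn (fun y => M - v y) (ball x ε) volume :=
      (integrableOn_const measure_ball_lt_top.ne).sub (hIv x)
    have hup : δ * eT ≤ ∫ y in ball x ε, (M - v y) := by
      calc δ * eT = ∫ _ in Ebad, δ := by
            rw [setIntegral_const, smul_eq_mul, measureReal_def, ← heTdef, mul_comm]
      _ ≤ ∫ y in Ebad, (M - v y) := by
          apply setIntegral_mono_on
            (integrableOn_const (lt_of_le_of_lt (measure_mono hEsub) measure_ball_lt_top).ne)
            (hIMv.mono_set hEsub) hEmeas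
          intro y hy
          have h1 : v y ≤ M - δ := hy.2
          linarith
      _ ≤ ∫ y in ball x ε, (M - v y) := by
          apply setIntegral_mono_set hIMv
          · filter_upwards [ae_restrict_mem measurableSet_ball] with y hy
            have h6 := hvM y (hballsub x hx hy)
            simp only [Pi.zero_apply]
            linarith
          · exact HasSubset.Subset.eventuallyLE hEsub
    have hMvInt : ∫ y in ball x ε, (M - v y) = M * T - T * A := by
      rw [integral_sub (integrableOn_const measure_ball_lt_top.ne : IntegrableOn (fun _ => M) (ball x ε) volume) (hIv x),
        setIntegral_const, smul_eq_mul, measureReal_def, ← hTdef, hIntA]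
      ring
    have hEb : eT < (4:ℝ)⁻¹^n * T := by
      have h1 : δ * eT ≤ M*T - T*A := by rw [← hMvInt]; exact hup
      have h2 : T*(M - η/β) < T*A := mul_lt_mul_of_pos_left hAlow hTpos
      have h3 : δ * eT < (η/β) * T := by nlinarith
      have h4 : η/β * T < ((4:ℝ)⁻¹^n * δ) * T := by
        apply mul_lt_mul_of_pos_right _ hTpos
        rw [div_lt_iff₀ hβ]
        nlinarith [hηδ]
      have h5 : δ * eT < δ * ((4:ℝ)⁻¹^n * T) := by nlinarith
      exact lt_of_mul_lt_mul_left h5 hδ.le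
    have hB'vol : (volume (ball c (ε/4))).toReal = (4:ℝ)⁻¹^n * T := by
      rw [hvol c (ε/4) (by positivity), hT, div_eq_mul_inv, mul_pow]
      ring
    have hneB : (ball c (ε/4) \ Ebad).Nonempty := by
      by_contra hcon2
      rw [not_nonempty_iff_eq_empty, diff_eq_empty] at hcon2
      have h1 : (volume (ball c (ε/4))).toReal ≤ eT := by
        rw [heTdef]
        exact ENNReal.toReal_mono hEfin (measure_mono hcon2)
      rw [hB'vol] at h1
      linarith
    obtain ⟨y, hyB', hyE⟩ := hneB
    have hyB : y ∈ ball x ε := hB'B hyB'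
    refine ⟨y, hballsub x hx hyB, ?_, ?_⟩
    · by_contra hvy
      push_neg at hvy
      exact hyE ⟨hyB, hvy⟩
    · exact hB'w y hyB'
  -- the chain
  set q : ℝ := β * (4:ℝ)⁻¹^n / 2 with hqdef
  have hq0 : 0 < q := by positivity
  have hq1 : q ≤ 1 := by
    have h4 : (4:ℝ)⁻¹^n ≤ 1 := pow_le_one₀ (by norm_num) (by norm_num)
    rw [hqdef]; nlinarith
  set N : ℕ := ⌈2 * D / ε⌉₊ with hNdef
  have chain : ∀ k : ℕ, k ≤ N → ∃ x ∈ Ω, M - (M - K) * q ^ (N - k) < v x ∧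
      dist x w ≤ D - k * (ε/2) := by
    intro k
    induction k with
    | zero =>
      intro _
      have hη0 : 0 < (M - K) * q ^ (N - 0) := by positivity
      have hlt : M - (M - K) * q ^ (N - 0) < sSup (v '' Ω) := by rw [← hMdef]; linarith
      obtain ⟨a, ⟨x, hxΩ, rfl⟩, hax⟩ := exists_lt_of_lt_csSup (hΩc.nonempty.image v) hlt
      exact ⟨x, hxΩ, hax, by simpa using hdistD x hxΩ⟩
    | succ k ih =>
      intro hk1
      obtain ⟨x, hxΩ, hvx, hxd⟩ := ih (le_of_lt (Nat.lt_of_succ_le hk1))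
      have hNk : N - k = (N - (k+1)) + 1 := by omega
      have hδpos : 0 < (M - K) * q ^ (N - (k+1)) := by positivity
      have hηδ : (M - K) * q ^ (N - k) < β * (4:ℝ)⁻¹^n * ((M - K) * q ^ (N - (k+1))) := by
        rw [hNk, pow_succ]
        have h0 : 0 < (M - K) * q ^ (N - (k+1)) := hδpos
        calc (M - K) * (q ^ (N - (k+1)) * q) = ((M - K) * q ^ (N - (k+1))) * q := by ring
        _ < ((M - K) * q ^ (N - (k+1))) * (β * (4:ℝ)⁻¹^n) := by
            apply mul_lt_mul_of_pos_left _ h0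
            rw [hqdef]
            have : 0 < β * (4:ℝ)⁻¹^n := by positivity
            linarith
        _ = β * (4:ℝ)⁻¹^n * ((M - K) * q ^ (N - (k+1))) := by ring
      obtain ⟨y, hymem, hvy, hyd⟩ := hstep _ _ hδpos hηδ x hxΩ hvx
      have hδle : (M - K) * q ^ (N - (k+1)) ≤ M - K := by
        nlinarith [pow_le_one₀ hq0.le hq1 (n := N - (k+1)), pow_pos hq0 (N - (k+1))]
      have hyΩ : y ∈ Ω := by
        rcases hymem with h | h
        · exact h
        · exfalso
          have := hvK y h
          linarith
      refine ⟨y, hyΩ, hvy, ?_⟩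
      have : dist y w ≤ D - k * (ε/2) - ε/2 := le_trans hyd (by linarith)
      push_cast
      linarith
  -- conclusion
  obtain ⟨x, hxΩ, _, hxd⟩ := chain N le_rfl
  have h2ε : 2*ε ≤ dist x w := hdistw x hxΩ
  have hND : D ≤ N * (ε/2) := by
    have := Nat.le_ceil (2 * D / ε)
    rw [← hNdef] at this
    have h1 : 2 * D / ε ≤ (N : ℝ) := this
    calc D = (2 * D / ε) * (ε/2) := by field_simp
    _ ≤ N * (ε/2) := by apply mul_le_mul_of_nonneg_right h1; positivity
  linarith
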